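/- For the three-qubit GHZ state |GHZ⟩ = (|000⟩ + |111⟩)/√2, the extensive three-tangle on the generalized-Schmidt-form state |Ψ⟩ = λ₀|000⟩ + λ₁e^{iφ}|100⟩ + λ₂|101⟩ + λ₃|110⟩ + λ₄|111⟩ equals T₃(|Ψ⟩) = 2λ₀λ₄; in particular T₃(|GHZ⟩) = 1 and T₃(|W⟩) = 0 for |W⟩ = (|100⟩+|010⟩+|001⟩)/√3. -/

import Mathlib

noncomputable section

/-- First invariant piece of Cayley's hyperdeterminant for three-qubit amplitudes. -/
def d1 (a : Fin 2 → Fin 2 → Fin 2 → ℂ) : ℂ :=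
  (a 0 0 0) ^ 2 * (a 1 1 1) ^ 2 + (a 0 0 1) ^ 2 * (a 1 1 0) ^ 2 +
    (a 0 1 0) ^ 2 * (a 1 0 1) ^ 2 + (a 1 0 0) ^ 2 * (a 0 1 1) ^ 2

/-- Second invariant piece of Cayley's hyperdeterminant. -/
def d2 (a : Fin 2 → Fin 2 → Fin 2 → ℂ) : ℂ :=
  a 0 0 0 * a 1 1 1 * a 0 1 1 * a 1 0 0 + a 0 0 0 * a 1 1 1 * a 1 0 1 * a 0 1 0 +
    a 0 0 0 * a 1 1 1 * a 1 1 0 * a 0 0 1 + a 0 1 1 * a 1 0 0 * a 1 0 1 * a 0 1 0 +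
    a 0 1 1 * a 1 0 0 * a 1 1 0 * a 0 0 1 + a 1 0 1 * a 0 1 0 * a 1 1 0 * a 0 0 1

/-- Third invariant piece of Cayley's hyperdeterminant. -/
def d3 (a : Fin 2 → Fin 2 → Fin 2 → ℂ) : ℂ :=
  a 0 0 0 * a 1 1 0 * a 1 0 1 * a 0 1 1 + a 1 1 1 * a 0 0 1 * a 0 1 0 * a 1 0 0

/-- The three-tangle (Coffman–Kundu–Wootters residual tangle) of a pure three-qubit
state with amplitudes `a i j k`. -/
def tau3 (a : Fin 2 → Fin 2 → Fin 2 → ℂ) : ℝ :=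
  4 * ‖d1 a - 2 * d2 a + 4 * d3 a‖

/-- The extensive three-tangle `T₃ = √τ₃` of a pure three-qubit state. -/
def T3 (a : Fin 2 → Fin 2 → Fin 2 → ℂ) : ℝ := Real.sqrt (tau3 a)

/-- on the generalized-Schmidt-form state
`|Ψ⟩ = λ₀|000⟩ + λ₁e^{iφ}|100⟩ + λ₂|101⟩ + λ₃|110⟩ + λ₄|111⟩` the extensive
three-tangle equals `2λ₀λ₄`; in particular `T₃(GHZ) = 1` and `T₃(W) = 0`. -/
theorem stmt15 (l0 l1 l2 l3 l4 φ : ℝ)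
    (h0 : 0 ≤ l0) (h1 : 0 ≤ l1) (h2 : 0 ≤ l2) (h3 : 0 ≤ l3) (h4 : 0 ≤ l4)
    (hnorm : l0 ^ 2 + l1 ^ 2 + l2 ^ 2 + l3 ^ 2 + l4 ^ 2 = 1)
    (a : Fin 2 → Fin 2 → Fin 2 → ℂ)
    (ha : a = fun i j k =>
      if (i, j, k) = ((0 : Fin 2), (0 : Fin 2), (0 : Fin 2)) then (l0 : ℂ)
      else if (i, j, k) = ((1 : Fin 2), (0 : Fin 2), (0 : Fin 2)) then
        (l1 : ℂ) * Complex.exp (φ * Complex.I)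
      else if (i, j, k) = ((1 : Fin 2), (0 : Fin 2), (1 : Fin 2)) then (l2 : ℂ)
      else if (i, j, k) = ((1 : Fin 2), (1 : Fin 2), (0 : Fin 2)) then (l3 : ℂ)
      else if (i, j, k) = ((1 : Fin 2), (1 : Fin 2), (1 : Fin 2)) then (l4 : ℂ)
      else 0) :
    T3 a = 2 * l0 * l4 ∧
    T3 (fun i j k => if i = j ∧ j = k then ((Real.sqrt 2)⁻¹ : ℂ) else 0) = 1 ∧
    T3 (fun i j k => if (i : ℕ) + (j : ℕ) + (k : ℕ) = 1
        then ((Real.sqrt 3)⁻¹ : ℂ) else 0) = 0 := by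
  subst ha
  refine ⟨?_, ?_, ?_⟩
  · have hτ : tau3 (fun i j k =>
      if (i, j, k) = ((0 : Fin 2), (0 : Fin 2), (0 : Fin 2)) then (l0 : ℂ)
      else if (i, j, k) = ((1 : Fin 2), (0 : Fin 2), (0 : Fin 2)) then
        (l1 : ℂ) * Complex.exp (φ * Complex.I)
      else if (i, j, k) = ((1 : Fin 2), (0 : Fin 2), (1 : Fin 2)) then (l2 : ℂ)
      else if (i, j, k) = ((1 : Fin 2), (1 : Fin 2), (0 : Fin 2)) then (l3 : ℂ)
      else if (i, j, k) = ((1 : Fin 2), (1 : Fin 2), (1 : Fin 2)) then (l4 : ℂ)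
      else 0) = (2 * l0 * l4) ^ 2 := by
      simp only [tau3, d1, d2, d3]
      norm_num [Prod.ext_iff, Fin.ext_iff]
      ring
    rw [T3, hτ, Real.sqrt_sq (by positivity)]
  · have hτ : tau3 (fun i j k =>
        if i = j ∧ j = k then ((Real.sqrt 2)⁻¹ : ℂ) else 0) = 1 := by
      simp only [tau3, d1, d2, d3]
      norm_num
    rw [T3, hτ, Real.sqrt_one]
  · have hτ : tau3 (fun i j k =>
        if (i : ℕ) + (j : ℕ) + (k : ℕ) = 1 then ((Real.sqrt 3)⁻¹ : ℂ) else 0) = 0 := by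
      simp only [tau3, d1, d2, d3]
      norm_num
    rw [T3, hτ, Real.sqrt_zero]

end
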